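/- Let n ≥ 2 be an integer and ω > 1 − 2/n a real number. Let q be the diagonal n×n matrix with diagonal entries q_{11},…,q_{nn} ∈ ]0,+∞[ and let Q ≡ Π_{j=1}^n ]0,q_{jj}[. Let Ω_Q be a bounded open subset of ℝⁿ with closure contained in Q, and assume that Q∖cl(Ω_Q) is connected. Set S[Ω_Q] ≡ qℤⁿ + Ω_Q and S[Ω_Q]⁻ ≡ ℝⁿ∖cl(S[Ω_Q]). Let u : cl(S[Ω_Q]⁻) → ℝⁿ be continuous on cl(S[Ω_Q]⁻), twice continuously differentiable on the open set S[Ω_Q]⁻, q-periodic (i.e., u(x+qz) = u(x) for all x ∈ cl(S[Ω_Q]⁻) and z ∈ ℤⁿ), and satisfy tr(T(ω,Du(x))·Du(x)ᵗ) = 0 for every x ∈ S[Ω_Q]⁻. Then u is constant on cl(S[Ω_Q]⁻). -/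

import Mathlib

open Matrix Set

/-- Partial derivative `∂f/∂x_j` of a scalar field on `ℝⁿ`. -/
noncomputable def pd {n : ℕ} (f : (Fin n → ℝ) → ℝ) (j : Fin n) (x : Fin n → ℝ) : ℝ :=
  fderiv ℝ f x (Pi.single j 1)

/-- The Jacobian matrix `(∂u_i/∂x_j)_{i,j}` of a vector field on `ℝⁿ`. -/
noncomputable def jac {n : ℕ} (u : (Fin n → ℝ) → Fin n → ℝ) (x : Fin n → ℝ) :
    Matrix (Fin n) (Fin n) ℝ :=
  Matrix.of fun i j => pd (fun w => u w i) j x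

/-- `T ω A = (ω-1)(tr A) Iₙ + A + Aᵗ`. -/
noncomputable def elastT (n : ℕ) (ω : ℝ) (A : Matrix (Fin n) (Fin n) ℝ) :
    Matrix (Fin n) (Fin n) ℝ :=
  ((ω - 1) * Matrix.trace A) • (1 : Matrix (Fin n) (Fin n) ℝ) + A + Aᵀ

-- generic constancy on open preconnected
theorem aux_const {E F : Type*} [NormedAddCommGroup E] [NormedSpace ℝ E]
    [NormedAddCommGroup F] [NormedSpace ℝ F] {f : E → F} {s : Set E}
    (hs : IsOpen s) (hpc : IsPreconnected s)
    (hd : ∀ x ∈ s, DifferentiableAt ℝ f x)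
    (hz : ∀ x ∈ s, fderiv ℝ f x = 0)
    {x y : E} (hx : x ∈ s) (hy : y ∈ s) : f x = f y := by
  -- local constancy
  have hloc : ∀ w ∈ s, ∀ᶠ v in nhds w, f v = f w := by
    intro w hw
    obtain ⟨r, hr, hball⟩ := Metric.isOpen_iff.1 hs w hw
    filter_upwards [Metric.ball_mem_nhds w hr] with v hv
    have hconv : Convex ℝ (Metric.ball w r) := convex_ball w r
    have hdiff : DifferentiableOn ℝ f (Metric.ball w r) :=
      fun z hz' => (hd z (hball hz')).differentiableWithinAt
    have : ∀ z ∈ Metric.ball w r, fderivWithin ℝ f (Metric.ball w r) z = 0 := by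
      intro z hz'
      rw [fderivWithin_of_isOpen Metric.isOpen_ball hz']
      exact hz z (hball hz')
    exact hconv.is_const_of_fderivWithin_eq_zero hdiff this hv (Metric.mem_ball_self hr)
  set A : Set E := {w | w ∈ s ∧ f w = f x} with hA
  set B : Set E := {w | w ∈ s ∧ f w ≠ f x} with hB
  have hAo : IsOpen A := by
    rw [isOpen_iff_mem_nhds]
    rintro w ⟨hw, hfw⟩
    filter_upwards [hloc w hw, hs.mem_nhds hw] with v hv hvs
    exact ⟨hvs, hv.trans hfw⟩
  have hBo : IsOpen B := by
    rw [isOpen_iff_mem_nhds]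
    rintro w ⟨hw, hfw⟩
    filter_upwards [hloc w hw, hs.mem_nhds hw] with v hv hvs
    exact ⟨hvs, hv.symm ▸ hfw⟩
  have := hpc.subset_left_of_subset_union hAo hBo
    (Set.disjoint_left.2 (by rintro w ⟨-, h1⟩ ⟨-, h2⟩; exact h2 h1))
    (fun w hw => by by_cases h : f w = f x
                    · exact Or.inl ⟨hw, h⟩
                    · exact Or.inr ⟨hw, h⟩)
    ⟨x, hx, hx, rfl⟩
  exact ((this hy).2).symm

theorem aux_skew {n : ℕ} (hn : 1 ≤ n) {ω : ℝ} (hω : 1 - 2 / (n : ℝ) < ω)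
    (A : Matrix (Fin n) (Fin n) ℝ)
    (h : Matrix.trace (elastT n ω A * Aᵀ) = 0) : A + Aᵀ = 0 := by
  have hn0 : (0:ℝ) < n := by exact_mod_cast hn
  set B := A + Aᵀ with hB
  have hBs : Bᵀ = B := by simp [hB, Matrix.transpose_add, add_comm]
  -- expand the trace
  have h1 : Matrix.trace (elastT n ω A * Aᵀ) =
      (ω - 1) * Matrix.trace A * Matrix.trace Aᵀ + Matrix.trace (B * Aᵀ) := by
    simp [elastT, Matrix.add_mul, Matrix.smul_mul, Matrix.trace_add, Matrix.trace_smul,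
      hB, smul_eq_mul, mul_assoc]
    ring
  have h2 : Matrix.trace (B * Aᵀ) = (1/2) * Matrix.trace (B * B) := by
    have : Matrix.trace (B * Aᵀ) = Matrix.trace (B * A) := by
      calc Matrix.trace (B * Aᵀ) = Matrix.trace ((B * Aᵀ)ᵀ) := (Matrix.trace_transpose _).symm
        _ = Matrix.trace (A * Bᵀ) := by rw [Matrix.transpose_mul, Matrix.transpose_transpose]
        _ = Matrix.trace (A * B) := by rw [hBs]
        _ = Matrix.trace (B * A) := Matrix.trace_mul_comm _ _
    have h3 : Matrix.trace (B * B) = Matrix.trace (B * A) + Matrix.trace (B * Aᵀ) := by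
      rw [hB]; rw [Matrix.mul_add, Matrix.trace_add]
    rw [this] at h3 ⊢
    linarith
  have htrB : Matrix.trace B = 2 * Matrix.trace A := by
    simp [hB, Matrix.trace_add, Matrix.trace_transpose, two_mul]
  -- trace (B*B) = ∑ i j, (B i j)^2
  have h4 : Matrix.trace (B * B) = ∑ i, ∑ j, (B i j)^2 := by
    rw [Matrix.trace]
    congr 1; funext i
    rw [Matrix.diag_apply, Matrix.mul_apply]
    congr 1; funext j
    have : B j i = B i j := by
      have h' := congrFun (congrFun hBs i) j
      simpa [Matrix.transpose_apply] using h'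
    rw [this]; ring
  -- Cauchy-Schwarz: (trace B)^2 ≤ n * ∑ i j (B i j)^2
  have h5 : (Matrix.trace B)^2 ≤ (n:ℝ) * ∑ i, ∑ j, (B i j)^2 := by
    have c1 : (∑ i, B i i)^2 ≤ (n:ℝ) * ∑ i, (B i i)^2 := by
      have := sq_sum_le_card_mul_sum_sq (s := Finset.univ) (f := fun i => B i i)
      simpa using this
    have c2 : ∑ i, (B i i)^2 ≤ ∑ i, ∑ j, (B i j)^2 := by
      apply Finset.sum_le_sum
      intro i _
      have := Finset.single_le_sum (f := fun j => (B i j)^2)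
        (fun j _ => sq_nonneg _) (Finset.mem_univ i)
      exact this
    calc (Matrix.trace B)^2 = (∑ i, B i i)^2 := by rw [Matrix.trace]; rfl
      _ ≤ (n:ℝ) * ∑ i, (B i i)^2 := c1
      _ ≤ (n:ℝ) * ∑ i, ∑ j, (B i j)^2 := by
          exact mul_le_mul_of_nonneg_left c2 (le_of_lt hn0)
  set t := Matrix.trace A with ht
  set s2 := ∑ i, ∑ j, (B i j)^2 with hs2
  have hs2nn : 0 ≤ s2 := Finset.sum_nonneg fun i _ => Finset.sum_nonneg fun j _ => sq_nonneg _
  have key : (ω - 1) * t * t + (1/2) * s2 = 0 := by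
    rw [h1, h2, h4, Matrix.trace_transpose] at h
    rw [← ht] at h
    linarith
  have h5' : 4 * t^2 ≤ (n:ℝ) * s2 := by
    rw [htrB] at h5; nlinarith
  have hcoef : 0 < (ω - 1) + 2 / (n:ℝ) := by
    have : 1 - 2/(n:ℝ) < ω := hω; linarith
  have ht0 : t = 0 := by
    by_contra h0
    have ht2 : 0 < t^2 := by positivity
    have : (1/2) * s2 ≥ (2/(n:ℝ)) * t^2 := by
      rw [ge_iff_le, div_mul_eq_mul_div, div_le_iff₀ hn0]; nlinarith
    nlinarith
  have hs20 : s2 = 0 := by rw [ht0] at key; linarith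
  have hs20' : ∑ i, ∑ j, (B i j)^2 = 0 := by rw [← hs2]; exact hs20
  ext i j
  have hrow : ∑ j, (B i j)^2 = 0 :=
    (Finset.sum_eq_zero_iff_of_nonneg (fun i _ =>
      Finset.sum_nonneg fun j _ => sq_nonneg (B i j))).1 hs20' i (Finset.mem_univ i)
  have hsq : (B i j)^2 = 0 :=
    (Finset.sum_eq_zero_iff_of_nonneg (fun j _ => sq_nonneg (B i j))).1 hrow j
      (Finset.mem_univ j)
  have : B i j = 0 := by nlinarith [hsq]
  simpa [hB] using this

theorem aux_affine {n : ℕ} {u : (Fin n → ℝ) → (Fin n → ℝ)} {s : Set (Fin n → ℝ)}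
    (hs : IsOpen s) (hpc : IsPreconnected s) (husm : ContDiffOn ℝ 2 u s)
    (hskew : ∀ x ∈ s, ∀ i j, pd (fun w => u w i) j x = - pd (fun w => u w j) i x)
    {x₀ : Fin n → ℝ} (hx₀ : x₀ ∈ s) :
    ∀ x ∈ s, u x = u x₀ + (fderiv ℝ u x₀) (x - x₀) := by
  set f : Fin n → (Fin n → ℝ) → ℝ := fun i w => u w i with hf
  have hCA : ∀ x ∈ s, ContDiffAt ℝ 2 u x := fun x hx => husm.contDiffAt (hs.mem_nhds hx)
  have hCAi : ∀ x ∈ s, ∀ i, ContDiffAt ℝ 2 (f i) x := by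
    intro x hx i
    exact ((ContinuousLinearMap.proj (R := ℝ) (φ := fun _ : Fin n => ℝ) i).contDiff.contDiffAt).comp x (hCA x hx)
  set g : Fin n → Fin n → (Fin n → ℝ) → ℝ := fun i j x => fderiv ℝ (f i) x (Pi.single j 1) with hg
  -- differentiability of the derivative
  have hfd : ∀ x ∈ s, ∀ i, DifferentiableAt ℝ (fderiv ℝ (f i)) x := by
    intro x hx i
    exact ((hCAi x hx i).fderiv_right (m := 1) (by norm_num)).differentiableAt (by norm_num)
  have hgfd : ∀ x ∈ s, ∀ i j, HasFDerivAt (g i j)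
      ((ContinuousLinearMap.apply ℝ ℝ (Pi.single j 1)).comp
        (fderiv ℝ (fderiv ℝ (f i)) x)) x := by
    intro x hx i j
    exact ((ContinuousLinearMap.apply ℝ ℝ (Pi.single j (1:ℝ))).hasFDerivAt).comp x
      (hfd x hx i).hasFDerivAt
  have hgd : ∀ x ∈ s, ∀ i j, DifferentiableAt ℝ (g i j) x :=
    fun x hx i j => (hgfd x hx i j).differentiableAt
  -- pd of g in terms of second derivative
  have hpdg : ∀ x ∈ s, ∀ i j k, fderiv ℝ (g i j) x (Pi.single k 1) =
      fderiv ℝ (fderiv ℝ (f i)) x (Pi.single k 1) (Pi.single j 1) := by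
    intro x hx i j k
    rw [(hgfd x hx i j).fderiv]
    rfl
  -- symmetry of second derivatives
  have hsym : ∀ x ∈ s, ∀ i j k, fderiv ℝ (g i j) x (Pi.single k 1) =
      fderiv ℝ (g i k) x (Pi.single j 1) := by
    intro x hx i j k
    rw [hpdg x hx i j k, hpdg x hx i k j]
    exact ((hCAi x hx i).isSymmSndFDerivAt (by simp)).eq _ _
  -- skewness of g, differentiated
  have hskew' : ∀ x ∈ s, ∀ i j, fderiv ℝ (g i j) x = - fderiv ℝ (g j i) x := by
    intro x hx i j
    have hev : g i j =ᶠ[nhds x] fun y => -(g j i y) := by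
      filter_upwards [hs.mem_nhds hx] with y hy
      exact hskew y hy i j
    rw [hev.fderiv_eq, fderiv_fun_neg]
  have hp0 : ∀ x ∈ s, ∀ i j k, fderiv ℝ (g i j) x (Pi.single k 1) = 0 := by
    intro x hx i j k
    have e1 : fderiv ℝ (g i j) x (Pi.single k 1) = fderiv ℝ (g i k) x (Pi.single j 1) :=
      hsym x hx i j k
    have e2 : fderiv ℝ (g i k) x (Pi.single j 1) = -(fderiv ℝ (g k i) x (Pi.single j 1)) := by
      rw [hskew' x hx i k]; rfl
    have e3 : fderiv ℝ (g k i) x (Pi.single j 1) = fderiv ℝ (g k j) x (Pi.single i 1) :=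
      hsym x hx k i j
    have e4 : fderiv ℝ (g k j) x (Pi.single i 1) = -(fderiv ℝ (g j k) x (Pi.single i 1)) := by
      rw [hskew' x hx k j]; rfl
    have e5 : fderiv ℝ (g j k) x (Pi.single i 1) = fderiv ℝ (g j i) x (Pi.single k 1) :=
      hsym x hx j k i
    have e6 : fderiv ℝ (g j i) x (Pi.single k 1) = -(fderiv ℝ (g i j) x (Pi.single k 1)) := by
      rw [hskew' x hx j i]; rfl
    linarith
  -- hence fderiv (g i j) = 0 on s
  have hgz : ∀ x ∈ s, ∀ i j, fderiv ℝ (g i j) x = 0 := by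
    intro x hx i j
    apply ContinuousLinearMap.coe_injective
    apply (Pi.basisFun ℝ (Fin n)).ext
    intro k
    simp only [Pi.basisFun_apply]
    rw [ContinuousLinearMap.coe_coe]
    simpa using hp0 x hx i j k
  -- g i j constant on s
  have hgconst : ∀ x ∈ s, ∀ i j, g i j x = g i j x₀ := by
    intro x hx i j
    exact aux_const hs hpc (fun y hy => hgd y hy i j) (fun y hy => hgz y hy i j) hx hx₀
  -- fderiv u is constant on s
  have hud : ∀ x ∈ s, DifferentiableAt ℝ u x :=
    fun x hx => (hCA x hx).differentiableAt two_ne_zero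
  have hfid : ∀ x ∈ s, ∀ i, DifferentiableAt ℝ (f i) x :=
    fun x hx i => (hCAi x hx i).differentiableAt two_ne_zero
  have hfp : ∀ x ∈ s, fderiv ℝ u x = ContinuousLinearMap.pi fun i => fderiv ℝ (f i) x := by
    intro x hx
    exact fderiv_pi (fun i => hfid x hx i)
  have huconst : ∀ x ∈ s, fderiv ℝ u x = fderiv ℝ u x₀ := by
    intro x hx
    rw [hfp x hx, hfp x₀ hx₀]
    apply ContinuousLinearMap.coe_injective
    apply (Pi.basisFun ℝ (Fin n)).ext
    intro j
    simp only [Pi.basisFun_apply]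
    rw [ContinuousLinearMap.coe_coe, ContinuousLinearMap.coe_coe]
    funext i
    simp only [ContinuousLinearMap.pi_apply]
    exact hgconst x hx i j
  -- subtract the linear part
  set L := fderiv ℝ u x₀ with hL
  have key : ∀ x ∈ s, ∀ y ∈ s, u x - L x = u y - L y := by
    intro x hx y hy
    apply aux_const (f := fun x => u x - L x) hs hpc
      (fun z hz => (hud z hz).sub L.differentiableAt)
      (fun z hz => ?_) hx hy
    rw [fderiv_fun_sub (hud z hz) L.differentiableAt, L.fderiv, huconst z hz, sub_self]
  intro x hx
  have := key x hx x₀ hx₀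
  rw [map_sub]
  abel_nf
  linear_combination (norm := abel1) this

theorem aux_top {n : ℕ} (hn : 1 ≤ n) (qd : Fin n → ℝ) (hqd : ∀ j, 0 < qd j)
    {K : Set (Fin n → ℝ)} (hK : IsClosed K)
    (hKQ : K ⊆ Set.univ.pi fun j => Set.Ioo 0 (qd j))
    (hconn : IsPreconnected ((Set.univ.pi fun j => Set.Ioo 0 (qd j)) \ K)) :
    IsClosed (⋃ z : Fin n → ℤ, (fun x => (fun j => qd j * (z j : ℝ)) + x) '' K) ∧
      IsPreconnected (⋃ z : Fin n → ℤ, (fun x => (fun j => qd j * (z j : ℝ)) + x) '' K)ᶜ ∧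
      (fun j => qd j) ∈ (⋃ z : Fin n → ℤ, (fun x => (fun j => qd j * (z j : ℝ)) + x) '' K)ᶜ := by
  set Q : Set (Fin n → ℝ) := Set.univ.pi fun j => Set.Ioo 0 (qd j) with hQdef
  set cQ : Set (Fin n → ℝ) := Set.univ.pi fun j => Set.Icc 0 (qd j) with hcQdef
  set tz : (Fin n → ℤ) → (Fin n → ℝ) := fun z => fun j => qd j * (z j : ℝ) with htz
  set T : Set (Fin n → ℝ) := ⋃ z : Fin n → ℤ, (fun x => tz z + x) '' K with hT
  set P : (Fin n → ℤ) → Set (Fin n → ℝ) := fun z => (fun x => tz z + x) '' (cQ \ K) with hP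
  -- membership in translated sets
  have hmem : ∀ (z : Fin n → ℤ) (A : Set (Fin n → ℝ)) (x : Fin n → ℝ),
      x ∈ (fun y => tz z + y) '' A ↔ (x - tz z) ∈ A := by
    intro z A x
    constructor
    · rintro ⟨a, ha, rfl⟩
      simpa using ha
    · intro h
      exact ⟨x - tz z, h, by ring⟩
  -- translate collision implies equal index
  have hcoll : ∀ (z z' : Fin n → ℤ) (a k : Fin n → ℝ), a ∈ cQ → k ∈ K →
      tz z + a = tz z' + k → z = z' := by
    intro z z' a k ha hk he
    funext j
    have ha' : 0 ≤ a j ∧ a j ≤ qd j := by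
      have := ha j (mem_univ j); exact ⟨this.1, this.2⟩
    have hk' : 0 < k j ∧ k j < qd j := by
      have := hKQ hk j (mem_univ j); exact ⟨this.1, this.2⟩
    have hej : qd j * (z j : ℝ) + a j = qd j * (z' j : ℝ) + k j := congrFun he j
    have heq : qd j * ((z j : ℝ) - (z' j : ℝ)) = k j - a j := by ring_nf; linarith
    have hq := hqd j
    have h1 : (-1 : ℝ) < (z j : ℝ) - (z' j : ℝ) := by nlinarith [ha'.1, ha'.2, hk'.1, hk'.2]
    have h2 : (z j : ℝ) - (z' j : ℝ) < 1 := by nlinarith [ha'.1, ha'.2, hk'.1, hk'.2]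
    have hz1 : z j - z' j < 1 := by exact_mod_cast (by push_cast; linarith : ((z j - z' j : ℤ) : ℝ) < 1)
    have hz2 : (-1 : ℤ) < z j - z' j := by exact_mod_cast (by push_cast; linarith : (-1 : ℝ) < ((z j - z' j : ℤ) : ℝ))
    omega
  -- T is closed
  have hTclosed : IsClosed T := by
    rw [hT]
    apply LocallyFinite.isClosed_iUnion
    · intro x
      refine ⟨Metric.ball x 1, Metric.ball_mem_nhds x one_pos, ?_⟩
      have hsub : {z : Fin n → ℤ | ((fun y => tz z + y) '' K ∩ Metric.ball x 1).Nonempty} ⊆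
          Set.univ.pi fun j => Set.Icc (⌊(x j - 1 - qd j) / qd j⌋) (⌈(x j + 1) / qd j⌉) := by
        rintro z ⟨y, ⟨k, hk, rfl⟩, hy⟩
        intro j _
        have hkj := hKQ hk j (mem_univ j)
        have hdist : |tz z j + k j - x j| < 1 := by
          have h1 := dist_le_pi_dist (tz z + k) x j
          simp only [Pi.add_apply] at h1
          have h2 : dist (tz z + k) x < 1 := Metric.mem_ball.1 hy
          rw [Real.dist_eq] at h1
          linarith
        rw [abs_lt] at hdist
        have hq := hqd j
        have hlb : (x j - 1 - qd j) / qd j ≤ (z j : ℝ) := by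
          rw [div_le_iff₀ hq]
          simp only [htz] at hdist
          nlinarith [hkj.1, hkj.2]
        have hub : (z j : ℝ) ≤ (x j + 1) / qd j := by
          rw [le_div_iff₀ hq]
          simp only [htz] at hdist
          nlinarith [hkj.1, hkj.2]
        constructor
        · have := Int.floor_mono hlb
          simpa using this
        · have := Int.ceil_mono hub
          simpa using this
      exact Set.Finite.subset (Set.Finite.pi fun j => Set.finite_Icc _ _) hsub
    · intro z
      have : (fun y => tz z + y) '' K = (Homeomorph.addLeft (tz z)) '' K := rfl
      rw [this]
      exact (Homeomorph.addLeft (tz z)).isClosedMap _ hK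
  -- each P z avoids T
  have hPT : ∀ z, P z ⊆ Tᶜ := by
    intro z x hx hxT
    obtain ⟨a, ha, hax⟩ := hx
    rw [hT, Set.mem_iUnion] at hxT
    obtain ⟨z', hz'⟩ := hxT
    obtain ⟨k, hk, hkx⟩ := hz'
    have he : tz z + a = tz z' + k := by
      have h1 : tz z + a = x := hax
      have h2 : tz z' + k = x := hkx
      rw [h1, h2]
    have hzz : z = z' := hcoll z z' a k ha.1 hk he
    subst hzz
    have : a = k := by
      have := he
      apply add_left_cancel this
    exact ha.2 (this ▸ hk)
  -- Tᶜ is covered by the P z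
  have hTP : Tᶜ ⊆ ⋃ z, P z := by
    intro x hx
    set z : Fin n → ℤ := fun j => ⌊x j / qd j⌋ with hz
    rw [Set.mem_iUnion]
    refine ⟨z, ?_⟩
    rw [hP, hmem]
    constructor
    · intro j _
      have hq := hqd j
      have h1 : (⌊x j / qd j⌋ : ℝ) ≤ x j / qd j := Int.floor_le _
      have h2 : x j / qd j < ⌊x j / qd j⌋ + 1 := Int.lt_floor_add_one _
      rw [div_lt_iff₀ hq] at h2
      rw [le_div_iff₀ hq] at h1
      simp only [Set.mem_Icc, Pi.sub_apply, htz, hz]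
      constructor <;> nlinarith
    · intro hcon
      apply hx
      rw [hT, Set.mem_iUnion]
      exact ⟨z, (hmem z K x).2 hcon⟩
  -- cQ \ K is preconnected
  have hcQK : IsPreconnected (cQ \ K) := by
    apply hconn.subset_closure
    · exact Set.diff_subset_diff_left (Set.pi_mono fun j _ => Set.Ioo_subset_Icc_self)
    · intro x hx
      have hxQ : x ∈ closure Q := by
        rw [hQdef, closure_pi_set]
        intro j hj
        show x j ∈ closure (Ioo 0 (qd j))
        rw [closure_Ioo (ne_of_lt (hqd j))]
        exact hx.1 j (mem_univ j)
      have hxK : Kᶜ ∈ nhds x := hK.isOpen_compl.mem_nhds hx.2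
      have := IsOpen.inter_closure hK.isOpen_compl (s := Kᶜ) (t := Q)
      have hmem2 : x ∈ Kᶜ ∩ closure Q := ⟨hx.2, hxQ⟩
      have hsub2 : closure (Kᶜ ∩ Q) ⊆ closure (Q \ K) := by
        apply closure_mono
        intro y hy
        exact ⟨hy.2, hy.1⟩
      exact hsub2 (this hmem2)
  -- each P z preconnected
  have hPpc : ∀ z, IsPreconnected (P z) := by
    intro z
    rw [hP]
    exact hcQK.image _ (continuous_const.add continuous_id).continuousOn
  -- corner points
  have hcorner : ∀ z z' : Fin n → ℤ, (∀ j, z' j = z j ∨ z' j = z j + 1) →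
      (fun j => qd j * ((z j : ℝ) + 1)) ∈ P z' := by
    intro z z' hzz'
    rw [hP, hmem]
    have hform : ∀ j, (fun j => qd j * ((z j : ℝ) + 1)) j - tz z' j =
        qd j * ((z j : ℝ) + 1 - (z' j : ℝ)) := by
      intro j; simp only [htz]; ring
    constructor
    · intro j _
      have hq := hqd j
      rcases hzz' j with h | h
      · have : ((z j : ℝ) + 1 - (z' j : ℝ)) = 1 := by rw [h]; ring
        simp only [Pi.sub_apply, hform j, this, Set.mem_Icc]
        constructor <;> nlinarith
      · have : ((z j : ℝ) + 1 - (z' j : ℝ)) = 0 := by rw [h]; push_cast; ring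
        simp only [Pi.sub_apply, hform j, this, Set.mem_Icc]
        constructor <;> nlinarith
    · intro hcon
      have := hKQ hcon
      have j0 : Fin n := ⟨0, hn⟩
      have hj0 := this j0 (mem_univ j0)
      simp only [Pi.sub_apply, hform j0, Set.mem_Ioo] at hj0
      have hq := hqd j0
      rcases hzz' j0 with h | h
      · have : ((z j0 : ℝ) + 1 - (z' j0 : ℝ)) = 1 := by rw [h]; ring
        rw [this] at hj0
        nlinarith [hj0.2]
      · have : ((z j0 : ℝ) + 1 - (z' j0 : ℝ)) = 0 := by rw [h]; push_cast; ring
        rw [this] at hj0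
        nlinarith [hj0.1]
  -- base point
  have hb0 : (fun j => qd j) ∈ P 0 := by
    have h := hcorner 0 0 (fun j => Or.inl rfl)
    have : (fun j => qd j * (((0 : Fin n → ℤ) j : ℝ) + 1)) = fun j : Fin n => qd j := by
      funext j; simp
    rwa [this] at h
  have hsumupd : ∀ (z : Fin n → ℤ) (j0 : Fin n) (v : ℤ),
      ∑ j, (Function.update z j0 v j).natAbs
        = v.natAbs + ∑ j ∈ Finset.univ.erase j0, (z j).natAbs := by
    intro z j0 v
    have heq : (fun j => (Function.update z j0 v j).natAbs)
        = Function.update (fun j => (z j).natAbs) j0 v.natAbs := by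
      funext j
      by_cases hj : j = j0
      · subst hj; simp
      · simp [Function.update_of_ne hj]
    calc ∑ j, (Function.update z j0 v j).natAbs
        = ∑ j, (Function.update (fun j => (z j).natAbs) j0 v.natAbs) j := by rw [← heq]
      _ = v.natAbs + ∑ j ∈ Finset.univ.erase j0, (z j).natAbs := by
          rw [Finset.sum_update_of_mem (Finset.mem_univ j0), ← Finset.erase_eq]
  set b : Fin n → ℝ := fun j => qd j with hb
  set comp := connectedComponentIn Tᶜ b with hcomp
  -- induction over cells
  have claim : ∀ m : ℕ, ∀ z : Fin n → ℤ, (∑ j, (z j).natAbs) = m → P z ⊆ comp := by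
    intro m
    induction m using Nat.strong_induction_on with
    | _ m IH =>
      intro z hzm
      by_cases hz0 : z = 0
      · subst hz0
        exact (hPpc 0).subset_connectedComponentIn hb0 (hPT 0)
      · -- find a coordinate with nonzero entry
        have : ∃ j0, z j0 ≠ 0 := by
          by_contra hcon
          push_neg at hcon
          exact hz0 (funext fun j => hcon j)
        obtain ⟨j0, hj0⟩ := this
        -- the neighbour cell z' and a shared corner point y
        obtain ⟨z', hsum, y, hyz, hyz'⟩ :
            ∃ z' : Fin n → ℤ, (∑ j, (z' j).natAbs) < m ∧
              ∃ y, y ∈ P z ∧ y ∈ P z' := by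
          rcases lt_or_gt_of_ne hj0 with hneg | hpos
          · -- z j0 < 0 : use z' = z + e_{j0}, corner of z
            refine ⟨Function.update z j0 (z j0 + 1), ?_, fun j => qd j * ((z j : ℝ) + 1), ?_, ?_⟩
            · rw [← hzm, hsumupd,
                ← Finset.add_sum_erase Finset.univ _ (Finset.mem_univ j0)]
              omega
            · exact hcorner z z (fun j => Or.inl rfl)
            · apply hcorner z _
              intro j
              by_cases hj : j = j0
              · subst hj; right; rw [Function.update_self]
              · left; rw [Function.update_of_ne hj]
          · -- z j0 > 0 : use z' = z - e_{j0}, corner of z'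
            refine ⟨Function.update z j0 (z j0 - 1), ?_, fun j =>
              qd j * (((Function.update z j0 (z j0 - 1)) j : ℝ) + 1), ?_, ?_⟩
            · rw [← hzm, hsumupd,
                ← Finset.add_sum_erase Finset.univ _ (Finset.mem_univ j0)]
              omega
            · apply hcorner _ z
              intro j
              by_cases hj : j = j0
              · subst hj; right; rw [Function.update_self]; ring
              · left; rw [Function.update_of_ne hj]
            · exact hcorner _ _ (fun j => Or.inl rfl)
        have hyc : y ∈ comp := IH _ hsum z' rfl hyz'
        have h1 : P z ⊆ connectedComponentIn Tᶜ y :=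
          (hPpc z).subset_connectedComponentIn hyz (hPT z)
        have h2 : connectedComponentIn Tᶜ b = connectedComponentIn Tᶜ y :=
          connectedComponentIn_eq hyc
        rw [hcomp, h2]
        exact h1
  -- conclude
  have hTc : Tᶜ = comp := by
    apply Set.Subset.antisymm
    · intro x hx
      obtain ⟨z, hz⟩ := Set.mem_iUnion.1 (hTP hx)
      exact claim _ z rfl hz
    · exact connectedComponentIn_subset _ _
  refine ⟨hTclosed, ?_, hPT 0 hb0⟩
  rw [hTc]
  exact isPreconnected_connectedComponentIn


theorem periodic_rigid_displacement_constant (n : ℕ) (hn : 2 ≤ n) (ω : ℝ)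
    (hω : 1 - 2 / (n : ℝ) < ω)
    (qd : Fin n → ℝ) (hqd : ∀ j, 0 < qd j)
    -- the fundamental periodicity cell `Q = Π_j ]0, q_jj[`
    (Q : Set (Fin n → ℝ)) (hQ : Q = Set.univ.pi fun j => Set.Ioo 0 (qd j))
    -- the perforation `Ω_Q`: bounded, open, with closure contained in `Q`,
    -- and such that `Q ∖ cl(Ω_Q)` is connected
    (Ω : Set (Fin n → ℝ)) (hΩo : IsOpen Ω) (hΩb : Bornology.IsBounded Ω)
    (hΩQ : closure Ω ⊆ Q) (hconn : IsConnected (Q \ closure Ω))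
    -- the periodic perforated sets `S[Ω_Q] = qℤⁿ + Ω_Q` and `S[Ω_Q]⁻`
    (S Sm : Set (Fin n → ℝ))
    (hS : S = ⋃ z : Fin n → ℤ, (fun x => (fun j => qd j * (z j : ℝ)) + x) '' Ω)
    (hSm : Sm = (closure S)ᶜ)
    -- the displacement field `u`
    (u : (Fin n → ℝ) → Fin n → ℝ)
    (hucont : ContinuousOn u (closure Sm))
    (husm : ContDiffOn ℝ 2 u Sm)
    (hper : ∀ x ∈ closure Sm, ∀ z : Fin n → ℤ,
      u (x + fun j => qd j * (z j : ℝ)) = u x)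
    (htr : ∀ x ∈ Sm, Matrix.trace (elastT n ω (jac u x) * (jac u x)ᵀ) = 0) :
    ∃ c : Fin n → ℝ, ∀ x ∈ closure Sm, u x = c := by
  have hn1 : 1 ≤ n := le_trans one_le_two hn
  have hKQ : closure Ω ⊆ Set.univ.pi fun j => Set.Ioo 0 (qd j) := by rw [← hQ]; exact hΩQ
  have hQconn : IsPreconnected ((Set.univ.pi fun j => Set.Ioo 0 (qd j)) \ closure Ω) := by
    rw [← hQ]; exact hconn.isPreconnected
  obtain ⟨hTcl, hTpc, hbT⟩ := aux_top hn1 qd hqd isClosed_closure hKQ hQconn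
  set T : Set (Fin n → ℝ) :=
    ⋃ z : Fin n → ℤ, (fun x => (fun j => qd j * (z j : ℝ)) + x) '' closure Ω with hTdef
  -- `closure S = T`
  have hST : closure S = T := by
    apply Set.Subset.antisymm
    · apply closure_minimal _ hTcl
      rw [hS, hTdef]
      apply Set.iUnion_subset
      intro z
      exact subset_trans (Set.image_mono subset_closure)
        (Set.subset_iUnion (fun z : Fin n → ℤ =>
          (fun x => (fun j => qd j * (z j : ℝ)) + x) '' closure Ω) z)
    · rw [hTdef]
      apply Set.iUnion_subset
      intro z
      have himg : (fun x => (fun j => qd j * (z j : ℝ)) + x) '' closure Ω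
          = closure ((fun x => (fun j => qd j * (z j : ℝ)) + x) '' Ω) :=
        (Homeomorph.addLeft (fun j => qd j * (z j : ℝ))).image_closure Ω
      rw [himg]
      apply closure_mono
      rw [hS]
      exact Set.subset_iUnion
        (fun z : Fin n → ℤ => (fun x => (fun j => qd j * (z j : ℝ)) + x) '' Ω) z
  have hSmT : Sm = Tᶜ := by rw [hSm, hST]
  have hSmOpen : IsOpen Sm := by rw [hSmT]; exact hTcl.isOpen_compl
  have hSmPc : IsPreconnected Sm := by rw [hSmT]; exact hTpc
  have hbSm : (fun j => qd j) ∈ Sm := by rw [hSmT]; exact hbT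
  -- translation invariance of `Sm`
  have htrans : ∀ x ∈ Sm, ∀ z : Fin n → ℤ, (x + fun j => qd j * (z j : ℝ)) ∈ Sm := by
    intro x hx z
    rw [hSmT] at hx ⊢
    intro hcon
    apply hx
    rw [hTdef, Set.mem_iUnion] at hcon ⊢
    obtain ⟨z', k, hk, hkx⟩ := hcon
    refine ⟨z' - z, k, hk, ?_⟩
    have hkx' : (fun j => qd j * (z' j : ℝ)) + k = x + fun j => qd j * (z j : ℝ) := hkx
    funext j
    have := congrFun hkx' j
    simp only [Pi.add_apply, Pi.sub_apply] at this ⊢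
    push_cast
    linear_combination this
  -- the Jacobian is skew-symmetric on `Sm`
  have hskew : ∀ x ∈ Sm, ∀ i j,
      pd (fun w => u w i) j x = - pd (fun w => u w j) i x := by
    intro x hx i j
    have h0 := aux_skew hn1 hω (jac u x) (htr x hx)
    have h1 := congrFun (congrFun h0 i) j
    simp only [Matrix.add_apply, Matrix.transpose_apply, Matrix.zero_apply] at h1
    simp only [jac, Matrix.of_apply] at h1
    linarith
  -- `u` is affine on `Sm`
  have haff := aux_affine hSmOpen hSmPc husm hskew hbSm
  set b : Fin n → ℝ := fun j => qd j with hb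
  set L := fderiv ℝ u b with hL
  -- the linear part kills all lattice vectors, hence vanishes
  have hLz : ∀ z : Fin n → ℤ, L (fun j => qd j * (z j : ℝ)) = 0 := by
    intro z
    have hb2 : (b + fun j => qd j * (z j : ℝ)) ∈ Sm := htrans b hbSm z
    have e1 := haff _ hb2
    have e2 := hper b (subset_closure hbSm) z
    rw [e2, left_eq_add] at e1
    rw [show (b + fun j => qd j * (z j : ℝ)) - b = fun j => qd j * (z j : ℝ) by
      funext j; simp] at e1
    exact e1
  have hL0 : L = 0 := by
    apply ContinuousLinearMap.coe_injective
    apply (Pi.basisFun ℝ (Fin n)).ext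
    intro k
    have h1 := hLz (Pi.single k 1)
    have harg : (fun j => qd j * ((Pi.single k 1 : Fin n → ℤ) j : ℝ))
        = (Pi.single k (qd k) : Fin n → ℝ) := by
      funext j
      by_cases hj : j = k
      · subst hj; simp
      · simp [Pi.single_apply, hj]
    rw [harg] at h1
    have hsing : (Pi.single k 1 : Fin n → ℝ)
        = (qd k)⁻¹ • (Pi.single k (qd k) : Fin n → ℝ) := by
      funext j
      by_cases hj : j = k
      · subst hj
        simp [Pi.single_apply]
        exact (inv_mul_cancel₀ (ne_of_gt (hqd _))).symm
      · simp [Pi.single_apply, hj]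
    simp only [Pi.basisFun_apply, ContinuousLinearMap.coe_coe]
    show L (Pi.single k 1) = (0 : (Fin n → ℝ) →L[ℝ] (Fin n → ℝ)) (Pi.single k 1)
    rw [hsing, ContinuousLinearMap.map_smul, h1]
    simp
  have hconstSm : ∀ x ∈ Sm, u x = u b := by
    intro x hx
    rw [haff x hx, hL0]
    simp
  refine ⟨u b, ?_⟩
  intro x hx
  haveI : (nhdsWithin x Sm).NeBot := mem_closure_iff_nhdsWithin_neBot.1 hx
  have h1 : Filter.Tendsto u (nhdsWithin x Sm) (nhds (u x)) :=
    (hucont x hx).mono_left (nhdsWithin_mono x subset_closure)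
  have h2 : Filter.Tendsto u (nhdsWithin x Sm) (nhds (u b)) := by
    apply Filter.Tendsto.congr' _ tendsto_const_nhds
    filter_upwards [self_mem_nhdsWithin] with y hy
    exact (hconstSm y hy).symm
  exact tendsto_nhds_unique h1 h2
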